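/- Let p ∈ (1, ∞) and n ∈ ℕ. There exists a constant c = c(n,p) > 0 such that for every ξ, η ∈ ℝ^n one has ⟨H_{p−1}(ξ) − H_{p−1}(η), ξ − η⟩ ≥ c · |H_{p/2}(ξ) − H_{p/2}(η)|². -/

import Mathlib

open scoped InnerProductSpace

/-- The map `H_γ : ℝ^n → ℝ^n`, `H_γ(ξ) = (|ξ|−1)₊^γ · ξ/|ξ|` for `ξ ≠ 0`, `H_γ(0) = 0`. -/
noncomputable def Hfun {n : ℕ} (γ : ℝ) (ξ : EuclideanSpace ℝ (Fin n)) :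
    EuclideanSpace ℝ (Fin n) :=
  open Classical in
  if ξ = (0 : EuclideanSpace ℝ (Fin n)) then 0 else (max (‖ξ‖ - 1) 0) ^ γ • ‖ξ‖⁻¹ • ξ

open Real

-- basic rpow helpers
lemma rp_mul_self {a p : ℝ} (ha : 0 ≤ a) (hp : 1 < p) : a ^ (p - 1) * a = a ^ p := by
  rcases eq_or_lt_of_le ha with h | h
  · rw [← h]; rw [Real.zero_rpow (by linarith : p ≠ 0)]; ring
  · rw [← Real.rpow_add_one (ne_of_gt h) (p - 1)]; ring_nf

lemma rp_half_sq {a p : ℝ} (ha : 0 ≤ a) : (a ^ (p / 2)) ^ 2 = a ^ p := by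
  rw [← Real.rpow_natCast (a ^ (p/2)) 2, ← Real.rpow_mul ha]
  norm_num

-- chord bounds on [1,2]
lemma chord_upper {q r : ℝ} (hq : 0 < q) (h1 : 1 ≤ r) (h2 : r ≤ 2) :
    r ^ q - 1 ≤ max 1 ((2:ℝ) ^ q - 1) * (r - 1) := by
  rcases le_total q 1 with hq1 | hq1
  · have h := Real.rpow_le_rpow_of_exponent_le h1 hq1
    rw [Real.rpow_one] at h
    have : (1:ℝ) ≤ max 1 ((2:ℝ)^q - 1) := le_max_left _ _
    nlinarith
  · have hc := (convexOn_rpow hq1).2 (Set.mem_Ici.2 (by norm_num : (0:ℝ) ≤ 1))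
      (Set.mem_Ici.2 (by norm_num : (0:ℝ) ≤ 2)) (by linarith : (0:ℝ) ≤ 2 - r)
      (by linarith : (0:ℝ) ≤ r - 1) (by ring)
    simp only [smul_eq_mul] at hc
    have he : (2 - r) * 1 + (r - 1) * 2 = r := by ring
    rw [he, Real.one_rpow] at hc
    have : (2:ℝ)^q - 1 ≤ max 1 ((2:ℝ)^q - 1) := le_max_right _ _
    nlinarith

lemma chord_lower {q r : ℝ} (hq : 0 < q) (h1 : 1 ≤ r) (h2 : r ≤ 2) :
    min 1 ((2:ℝ) ^ q - 1) * (r - 1) ≤ r ^ q - 1 := by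
  rcases le_total 1 q with hq1 | hq1
  · have h := Real.rpow_le_rpow_of_exponent_le h1 hq1
    rw [Real.rpow_one] at h
    have : min 1 ((2:ℝ)^q - 1) ≤ 1 := min_le_left _ _
    nlinarith
  · have hc := (Real.concaveOn_rpow (le_of_lt hq) hq1).2 (Set.mem_Ici.2 (by norm_num : (0:ℝ) ≤ 1))
      (Set.mem_Ici.2 (by norm_num : (0:ℝ) ≤ 2)) (by linarith : (0:ℝ) ≤ 2 - r)
      (by linarith : (0:ℝ) ≤ r - 1) (by ring)
    simp only [smul_eq_mul] at hc
    have he : (2 - r) * 1 + (r - 1) * 2 = r := by ring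
    rw [he, Real.one_rpow] at hc
    have : min 1 ((2:ℝ)^q - 1) ≤ (2:ℝ)^q - 1 := min_le_right _ _
    nlinarith

set_option maxHeartbeats 1000000 in
lemma scalar_core (p : ℝ) (hp : 1 < p) :
    ∃ c : ℝ, 0 < c ∧ c ≤ 1 ∧ ∀ a b : ℝ, 0 ≤ a → 0 ≤ b →
      c * (a ^ (p/2) - b ^ (p/2)) ^ 2 ≤ (a ^ (p-1) - b ^ (p-1)) * (a - b) := by
  have hq1 : 0 < p - 1 := by linarith
  have hq2 : 0 < p / 2 := by linarith
  obtain ⟨m, hm⟩ : ∃ m : ℝ, m = min 1 ((2:ℝ) ^ (p-1) - 1) := ⟨_, rfl⟩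
  obtain ⟨K, hK⟩ : ∃ K : ℝ, K = max 1 ((2:ℝ) ^ (p/2) - 1) := ⟨_, rfl⟩
  have h2q1 : (1:ℝ) < (2:ℝ) ^ (p-1) := Real.one_lt_rpow (by norm_num) hq1
  have hmpos : 0 < m := by rw [hm]; exact lt_min one_pos (by linarith)
  have hKpos : 0 < K := by rw [hK]; exact lt_of_lt_of_le one_pos (le_max_left _ _)
  have hd : (2:ℝ) ^ (1 - p) < 1 :=
    Real.rpow_lt_one_of_one_lt_of_neg (by norm_num) (by linarith)
  have hdpos : 0 < (2:ℝ) ^ (1 - p) := Real.rpow_pos_of_pos (by norm_num) _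
  obtain ⟨cf, hcf⟩ : ∃ cf : ℝ, cf = (1 - (2:ℝ) ^ (1 - p)) / 2 := ⟨_, rfl⟩
  have hcfpos : 0 < cf := by rw [hcf]; exact div_pos (by linarith) two_pos
  obtain ⟨c, hc⟩ : ∃ c : ℝ, c = min 1 (min cf (m / K ^ 2)) := ⟨_, rfl⟩
  have hcpos : 0 < c := by
    rw [hc]; exact lt_min one_pos (lt_min hcfpos (div_pos hmpos (pow_pos hKpos 2)))
  have hc1 : c ≤ 1 := by rw [hc]; exact min_le_left _ _
  refine ⟨c, hcpos, hc1, ?_⟩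
  have hccf : c ≤ cf := by rw [hc]; exact le_trans (min_le_right _ _) (min_le_left _ _)
  have hcmK : c ≤ m / K ^ 2 := by
    rw [hc]; exact le_trans (min_le_right _ _) (min_le_right _ _)
  have main : ∀ a b : ℝ, 0 ≤ b → b ≤ a →
      c * (a ^ (p/2) - b ^ (p/2)) ^ 2 ≤ (a ^ (p-1) - b ^ (p-1)) * (a - b) := by
    intro a b hb hba
    have ha : 0 ≤ a := le_trans hb hba
    have eb2 : (b ^ (p/2)) ^ 2 = b ^ p := rp_half_sq hb
    have eb1 : b ^ (p-1) * b = b ^ p := rp_mul_self hb hp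
    have ea2 : (a ^ (p/2)) ^ 2 = a ^ p := rp_half_sq ha
    have ea1 : a ^ (p-1) * a = a ^ p := rp_mul_self ha hp
    rcases le_or_gt a (2 * b) with hcase | hcase
    · -- near case
      rcases eq_or_lt_of_le hb with hb0 | hb0
      · have ha0 : a = 0 := le_antisymm (by linarith) ha
        rw [ha0, ← hb0]
        simp [Real.zero_rpow (by linarith : p/2 ≠ 0),
          Real.zero_rpow (by linarith : p-1 ≠ 0)]
      · obtain ⟨r, hr⟩ : ∃ r : ℝ, r = a / b := ⟨_, rfl⟩
        have har : a = r * b := by rw [hr]; field_simp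
        have h1r : 1 ≤ r := by rw [hr]; exact (one_le_div hb0).2 hba
        have h2r : r ≤ 2 := by rw [hr, div_le_iff₀ hb0]; linarith
        have hr0 : 0 ≤ r := by linarith
        have e1 : a ^ (p/2) = r ^ (p/2) * b ^ (p/2) := by
          rw [har, Real.mul_rpow hr0 hb]
        have e2 : a ^ (p-1) = r ^ (p-1) * b ^ (p-1) := by
          rw [har, Real.mul_rpow hr0 hb]
        have key : c * (r ^ (p/2) - 1) ^ 2 ≤ (r ^ (p-1) - 1) * (r - 1) := by
          have hu : r ^ (p/2) - 1 ≤ K * (r - 1) := by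
            rw [hK]; exact chord_upper hq2 h1r h2r
          have hl : m * (r - 1) ≤ r ^ (p-1) - 1 := by
            rw [hm]; exact chord_lower hq1 h1r h2r
          have hnn : 0 ≤ r ^ (p/2) - 1 := by
            have := Real.one_le_rpow h1r (le_of_lt hq2)
            linarith
          have h2u : (r ^ (p/2) - 1) ^ 2 ≤ (K * (r-1)) ^ 2 :=
            pow_le_pow_left₀ hnn hu 2
          have e : m / K ^ 2 * (K * (r-1)) ^ 2 = m * (r-1) ^ 2 := by
            field_simp
          have h2l : m * (r-1) ^ 2 ≤ (r ^ (p-1) - 1) * (r - 1) := by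
            nlinarith
          calc c * (r ^ (p/2) - 1) ^ 2 ≤ (m / K ^ 2) * (K * (r-1)) ^ 2 := by
                apply mul_le_mul hcmK h2u (sq_nonneg _) (by positivity)
            _ = m * (r-1) ^ 2 := e
            _ ≤ (r ^ (p-1) - 1) * (r - 1) := h2l
        have hbp : (0:ℝ) ≤ b ^ p := Real.rpow_nonneg hb p
        calc c * (a ^ (p/2) - b ^ (p/2)) ^ 2
            = c * (r ^ (p/2) - 1) ^ 2 * (b ^ p) := by rw [e1, ← eb2]; ring
          _ ≤ (r ^ (p-1) - 1) * (r - 1) * (b ^ p) :=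
              mul_le_mul_of_nonneg_right key hbp
          _ = (a ^ (p-1) - b ^ (p-1)) * (a - b) := by
              rw [e2, ← eb1, har]; ring
    · -- far case
      have hapos : 0 < a := lt_of_le_of_lt (by positivity) hcase
      have h1 : b ^ (p/2) ≤ a ^ (p/2) := Real.rpow_le_rpow hb hba (le_of_lt hq2)
      have h2 : (a ^ (p/2) - b ^ (p/2)) ^ 2 ≤ a ^ p := by
        rw [← ea2]
        apply pow_le_pow_left₀ (by linarith)
        have := Real.rpow_nonneg hb (p/2)
        linarith
      have h3 : b ^ (p-1) ≤ (a/2) ^ (p-1) :=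
        Real.rpow_le_rpow hb (by linarith) (le_of_lt hq1)
      have h4 : (a/2) ^ (p-1) = a ^ (p-1) * (2:ℝ) ^ (1-p) := by
        rw [Real.div_rpow ha (by norm_num : (0:ℝ) ≤ 2)]
        have : (2:ℝ) ^ (1-p) = ((2:ℝ) ^ (p-1))⁻¹ := by
          rw [← Real.rpow_neg (by norm_num : (0:ℝ) ≤ 2)]; ring_nf
        rw [this]; ring
      have hap1 : (0:ℝ) ≤ a ^ (p-1) := Real.rpow_nonneg ha _
      have hfac1 : a ^ (p-1) * (1 - (2:ℝ) ^ (1-p)) ≤ a ^ (p-1) - b ^ (p-1) := by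
        rw [h4] at h3; nlinarith
      have hfac2 : a / 2 ≤ a - b := by linarith
      have step1 : c * (a ^ (p/2) - b ^ (p/2)) ^ 2 ≤ cf * a ^ p :=
        mul_le_mul hccf h2 (sq_nonneg _) (le_of_lt hcfpos)
      have step2 : cf * a ^ p ≤ (a ^ (p-1) - b ^ (p-1)) * (a - b) := by
        have hfac1nn : (0:ℝ) ≤ a ^ (p-1) * (1 - (2:ℝ) ^ (1-p)) :=
          mul_nonneg hap1 (by linarith)
        have hprod : (a ^ (p-1) * (1 - (2:ℝ) ^ (1-p))) * (a / 2) ≤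
            (a ^ (p-1) - b ^ (p-1)) * (a - b) :=
          mul_le_mul hfac1 hfac2 (by linarith) (le_trans hfac1nn hfac1)
        have : cf * a ^ p = (a ^ (p-1) * (1 - (2:ℝ) ^ (1-p))) * (a / 2) := by
          rw [← ea1, hcf]; ring
        linarith
      linarith
  intro a b ha hb
  rcases le_total b a with h | h
  · exact main a b hb h
  · have := main b a ha h
    have e1 : (a ^ (p/2) - b ^ (p/2)) ^ 2 = (b ^ (p/2) - a ^ (p/2)) ^ 2 := by ring
    have e2 : (a ^ (p-1) - b ^ (p-1)) * (a - b)
        = (b ^ (p-1) - a ^ (p-1)) * (b - a) := by ring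
    rw [e1, e2]; exact this

lemma rp_add {x u v : ℝ} (hx : 0 ≤ x) (hu : u ≠ 0) (hv : v ≠ 0) (huv : u + v ≠ 0) :
    x ^ u * x ^ v = x ^ (u + v) := by
  rcases eq_or_lt_of_le hx with h | h
  · rw [← h, Real.zero_rpow hu, Real.zero_rpow huv, zero_mul]
  · rw [Real.rpow_add h]

set_option maxHeartbeats 1000000 in
lemma key_ineq (p c : ℝ) (hp : 1 < p) (hc : 0 < c) (hc1 : c ≤ 1)
    (hscalar : ∀ a b : ℝ, 0 ≤ a → 0 ≤ b →
      c * (a ^ (p/2) - b ^ (p/2)) ^ 2 ≤ (a ^ (p-1) - b ^ (p-1)) * (a - b))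
    (a b N M T : ℝ) (ha : 0 ≤ a) (hb : 0 ≤ b) (haN : a ≤ N) (hbM : b ≤ M)
    (hN1 : N - a ≤ 1) (hM1 : M - b ≤ 1)
    (hNa : 0 < a → N = a + 1) (hMb : 0 < b → M = b + 1)
    (hT1 : -1 ≤ T) (hT2 : T ≤ 1) :
    c * (a ^ p - 2 * a ^ (p/2) * b ^ (p/2) * T + b ^ p) ≤
      a ^ (p-1) * N - (a ^ (p-1) * M + b ^ (p-1) * N) * T + b ^ (p-1) * M := by
  have hq1 : (0:ℝ) < p - 1 := by linarith
  have hA : 0 ≤ a ^ (p-1) := Real.rpow_nonneg ha _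
  have hB : 0 ≤ b ^ (p-1) := Real.rpow_nonneg hb _
  have hA2 : 0 ≤ a ^ (p/2) := Real.rpow_nonneg ha _
  have hB2 : 0 ≤ b ^ (p/2) := Real.rpow_nonneg hb _
  have ea1 : a ^ (p-1) * a = a ^ p := rp_mul_self ha hp
  have eb1 : b ^ (p-1) * b = b ^ p := rp_mul_self hb hp
  have ea2 : (a ^ (p/2)) ^ 2 = a ^ p := rp_half_sq ha
  have eb2 : (b ^ (p/2)) ^ 2 = b ^ p := rp_half_sq hb
  -- Step 1 : replace N, M by a, b
  have hPQ : a ^ (p-1) * (M - b) + b ^ (p-1) * (N - a) ≤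
      a ^ (p-1) * (N - a) + b ^ (p-1) * (M - b) := by
    rcases lt_trichotomy a b with h | h | h
    · have hb0 : 0 < b := lt_of_le_of_lt ha h
      have hM : M = b + 1 := hMb hb0
      have hAB : a ^ (p-1) ≤ b ^ (p-1) :=
        Real.rpow_le_rpow ha (le_of_lt h) (le_of_lt hq1)
      nlinarith [sub_nonneg.2 hAB, sub_nonneg.2 haN]
    · rw [h]; linarith
    · have ha0 : 0 < a := lt_of_le_of_lt hb h
      have hN : N = a + 1 := hNa ha0
      have hBA : b ^ (p-1) ≤ a ^ (p-1) :=
        Real.rpow_le_rpow hb (le_of_lt h) (le_of_lt hq1)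
      nlinarith [sub_nonneg.2 hBA, sub_nonneg.2 hbM]
  have hW : (0:ℝ) ≤ a ^ (p-1) * (M - b) + b ^ (p-1) * (N - a) := by
    have := mul_nonneg hA (by linarith : (0:ℝ) ≤ M - b)
    have := mul_nonneg hB (by linarith : (0:ℝ) ≤ N - a)
    linarith
  have hWT : (a ^ (p-1) * (M - b) + b ^ (p-1) * (N - a)) * T ≤
      a ^ (p-1) * (M - b) + b ^ (p-1) * (N - a) := mul_le_of_le_one_right hW hT2
  have step1 : a ^ (p-1) * a - (a ^ (p-1) * b + b ^ (p-1) * a) * T + b ^ (p-1) * b ≤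
      a ^ (p-1) * N - (a ^ (p-1) * M + b ^ (p-1) * N) * T + b ^ (p-1) * M := by
    nlinarith [hPQ, hWT]
  -- AM-GM : 2 a^{p/2} b^{p/2} ≤ a^{p-1} b + b^{p-1} a
  have h2 : ((p:ℝ)-1)/2 ≠ 0 := by positivity
  have h12 : (1:ℝ)/2 ≠ 0 := by norm_num
  have eA : a ^ ((p-1)/2) * a ^ ((p-1)/2) = a ^ (p-1) := by
    rw [rp_add ha h2 h2 (by positivity)]; norm_num
  have eB : b ^ ((p-1)/2) * b ^ ((p-1)/2) = b ^ (p-1) := by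
    rw [rp_add hb h2 h2 (by positivity)]; norm_num
  have ea : a ^ ((1:ℝ)/2) * a ^ ((1:ℝ)/2) = a := by
    rw [rp_add ha h12 h12 (by norm_num)]; norm_num
  have eb : b ^ ((1:ℝ)/2) * b ^ ((1:ℝ)/2) = b := by
    rw [rp_add hb h12 h12 (by norm_num)]; norm_num
  have eax : a ^ ((p-1)/2) * a ^ ((1:ℝ)/2) = a ^ (p/2) := by
    rw [rp_add ha h2 h12 (by positivity)]; ring_nf
  have ebx : b ^ ((1:ℝ)/2) * b ^ ((p-1)/2) = b ^ (p/2) := by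
    rw [rp_add hb h12 h2 (by positivity)]; ring_nf
  have E1 : (a ^ ((p-1)/2) * b ^ ((1:ℝ)/2)) ^ 2 = a ^ (p-1) * b := by
    rw [mul_pow, sq, sq, eA, eb]
  have E2 : (a ^ ((1:ℝ)/2) * b ^ ((p-1)/2)) ^ 2 = a * b ^ (p-1) := by
    rw [mul_pow, sq, sq, ea, eB]
  have E3 : (a ^ ((p-1)/2) * b ^ ((1:ℝ)/2)) * (a ^ ((1:ℝ)/2) * b ^ ((p-1)/2))
      = a ^ (p/2) * b ^ (p/2) := by
    have h' : (a ^ ((p-1)/2) * b ^ ((1:ℝ)/2)) * (a ^ ((1:ℝ)/2) * b ^ ((p-1)/2))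
        = (a ^ ((p-1)/2) * a ^ ((1:ℝ)/2)) * (b ^ ((1:ℝ)/2) * b ^ ((p-1)/2)) := by ring
    rw [h', eax, ebx]
  have hamgm : 2 * (a ^ (p/2) * b ^ (p/2)) ≤ a ^ (p-1) * b + b ^ (p-1) * a := by
    nlinarith [sq_nonneg (a ^ ((p-1)/2) * b ^ ((1:ℝ)/2) - a ^ ((1:ℝ)/2) * b ^ ((p-1)/2)),
      E1, E2, E3]
  -- endpoint inequalities
  have hF1 : c * (a ^ p - 2 * (a ^ (p/2) * b ^ (p/2)) + b ^ p) ≤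
      a ^ p + b ^ p - (a ^ (p-1) * b + b ^ (p-1) * a) := by
    have h := hscalar a b ha hb
    nlinarith [h, ea1, eb1, ea2, eb2]
  have hFm : c * (a ^ p + 2 * (a ^ (p/2) * b ^ (p/2)) + b ^ p) ≤
      a ^ p + b ^ p + (a ^ (p-1) * b + b ^ (p-1) * a) := by
    have hap : 0 ≤ a ^ p := Real.rpow_nonneg ha _
    have hbp : 0 ≤ b ^ p := Real.rpow_nonneg hb _
    have habp : 0 ≤ a ^ (p/2) * b ^ (p/2) := mul_nonneg hA2 hB2
    nlinarith [hamgm]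
  have hcomb : c * (a ^ p - 2 * (a ^ (p/2) * b ^ (p/2)) * T + b ^ p) ≤
      a ^ p + b ^ p - (a ^ (p-1) * b + b ^ (p-1) * a) * T := by
    nlinarith [mul_nonneg (by linarith : (0:ℝ) ≤ 1 + T) (sub_nonneg.2 hF1),
      mul_nonneg (by linarith : (0:ℝ) ≤ 1 - T) (sub_nonneg.2 hFm)]
  nlinarith [step1, hcomb, ea1, eb1]

lemma H_eq {n : ℕ} {γ : ℝ} (hγ : γ ≠ 0) (ξ : EuclideanSpace ℝ (Fin n)) :
    Hfun γ ξ = (max (‖ξ‖ - 1) 0) ^ γ • (‖ξ‖⁻¹ • ξ) := by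
  unfold Hfun
  split_ifs with h
  · rw [h]
    have : max (‖(0 : EuclideanSpace ℝ (Fin n))‖ - 1) 0 = 0 := by
      rw [norm_zero]; norm_num
    rw [this, Real.zero_rpow hγ, zero_smul]
  · rfl

-- facts about a ξ
lemma plus_le {N : ℝ} (hN : 0 ≤ N) : max (N - 1) 0 ≤ N :=
  max_le (by linarith) hN

lemma plus_sub {N : ℝ} (hN : 0 ≤ N) (h1 : N ≤ 1) : N - max (N - 1) 0 ≤ 1 := by
  rw [max_eq_right (by linarith)]; linarith

set_option maxHeartbeats 1000000 in
/-- Let `p ∈ (1, ∞)` and `n ∈ ℕ`. There exists `c = c(n,p) > 0` such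
that for every `ξ, η ∈ ℝ^n`,
`⟨H_{p−1}(ξ) − H_{p−1}(η), ξ − η⟩ ≥ c · |H_{p/2}(ξ) − H_{p/2}(η)|²`. -/
theorem stmt_2 (n : ℕ) (p : ℝ) (hp1 : 1 < p) :
    ∃ c : ℝ, 0 < c ∧ ∀ ξ η : EuclideanSpace ℝ (Fin n),
      ⟪Hfun (p - 1) ξ - Hfun (p - 1) η, ξ - η⟫_ℝ ≥
        c * ‖Hfun (p / 2) ξ - Hfun (p / 2) η‖ ^ 2 := by
  obtain ⟨c, hc, hc1, hscalar⟩ := scalar_core p hp1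
  refine ⟨c, hc, ?_⟩
  intro ξ η
  have hγ1 : p - 1 ≠ 0 := by linarith
  have hγ2 : p / 2 ≠ 0 := by positivity
  obtain ⟨u, hu⟩ : ∃ u : EuclideanSpace ℝ (Fin n), u = ‖ξ‖⁻¹ • ξ := ⟨_, rfl⟩
  obtain ⟨v, hv⟩ : ∃ v : EuclideanSpace ℝ (Fin n), v = ‖η‖⁻¹ • η := ⟨_, rfl⟩
  obtain ⟨a, hadef⟩ : ∃ a : ℝ, a = max (‖ξ‖ - 1) 0 := ⟨_, rfl⟩
  obtain ⟨b, hbdef⟩ : ∃ b : ℝ, b = max (‖η‖ - 1) 0 := ⟨_, rfl⟩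
  have ha : 0 ≤ a := hadef ▸ le_max_right _ _
  have hb : 0 ≤ b := hbdef ▸ le_max_right _ _
  have hxu : ξ = ‖ξ‖ • u := by
    rcases eq_or_ne ξ 0 with h | h
    · simp [h, hu]
    · rw [hu, smul_smul, mul_inv_cancel₀ (norm_ne_zero_iff.2 h), one_smul]
  have hyv : η = ‖η‖ • v := by
    rcases eq_or_ne η 0 with h | h
    · simp [h, hv]
    · rw [hv, smul_smul, mul_inv_cancel₀ (norm_ne_zero_iff.2 h), one_smul]
  have hUcases : ⟪u, u⟫_ℝ = 1 ∨ (‖ξ‖ = 0 ∧ a = 0) := by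
    rcases eq_or_ne ξ 0 with h | h
    · right
      constructor
      · rw [h, norm_zero]
      · rw [hadef, h, norm_zero]; norm_num
    · left
      have hn : ‖ξ‖ ≠ 0 := norm_ne_zero_iff.2 h
      rw [hu, real_inner_smul_left, real_inner_smul_right, real_inner_self_eq_norm_sq]
      field_simp
  have hVcases : ⟪v, v⟫_ℝ = 1 ∨ (‖η‖ = 0 ∧ b = 0) := by
    rcases eq_or_ne η 0 with h | h
    · right
      constructor
      · rw [h, norm_zero]
      · rw [hbdef, h, norm_zero]; norm_num
    · left
      have hn : ‖η‖ ≠ 0 := norm_ne_zero_iff.2 h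
      rw [hv, real_inner_smul_left, real_inner_smul_right, real_inner_self_eq_norm_sq]
      field_simp
  -- T bounds
  have hnu : ‖u‖ ≤ 1 := by
    rcases eq_or_ne ξ 0 with h | h
    · simp [hu, h]
    · have hn : ‖ξ‖ ≠ 0 := norm_ne_zero_iff.2 h
      rw [hu, norm_smul, norm_inv, norm_norm, inv_mul_cancel₀ hn]
  have hnv : ‖v‖ ≤ 1 := by
    rcases eq_or_ne η 0 with h | h
    · simp [hv, h]
    · have hn : ‖η‖ ≠ 0 := norm_ne_zero_iff.2 h
      rw [hv, norm_smul, norm_inv, norm_norm, inv_mul_cancel₀ hn]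
  have hT : |⟪u, v⟫_ℝ| ≤ 1 := by
    calc |⟪u, v⟫_ℝ| ≤ ‖u‖ * ‖v‖ := abs_real_inner_le_norm u v
      _ ≤ 1 := by nlinarith [norm_nonneg u, norm_nonneg v]
  -- rewrite both sides
  rw [H_eq hγ1 ξ, H_eq hγ1 η, H_eq hγ2 ξ, H_eq hγ2 η, ← hu, ← hv,
    ← hadef, ← hbdef]
  rw [← real_inner_self_eq_norm_sq]
  conv_lhs => rw [hxu, hyv]
  simp only [inner_sub_left, inner_sub_right, real_inner_smul_left, real_inner_smul_right]
  -- now scalar goal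
  have hNU : ‖ξ‖ * ⟪u, u⟫_ℝ = ‖ξ‖ := by
    rcases hUcases with h | h
    · rw [h, mul_one]
    · rw [h.1, zero_mul]
  have hMV : ‖η‖ * ⟪v, v⟫_ℝ = ‖η‖ := by
    rcases hVcases with h | h
    · rw [h, mul_one]
    · rw [h.1, zero_mul]
  have haU : a ^ p * ⟪u, u⟫_ℝ = a ^ p := by
    rcases hUcases with h | h
    · rw [h, mul_one]
    · rw [h.2, Real.zero_rpow (by linarith : p ≠ 0), zero_mul]
  have hbV : b ^ p * ⟪v, v⟫_ℝ = b ^ p := by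
    rcases hVcases with h | h
    · rw [h, mul_one]
    · rw [h.2, Real.zero_rpow (by linarith : p ≠ 0), zero_mul]
  have ea2 : (a ^ (p/2)) * (a ^ (p/2)) = a ^ p := by
    rcases eq_or_lt_of_le ha with h | h
    · rw [← h, Real.zero_rpow hγ2, Real.zero_rpow (by linarith : p ≠ 0), mul_zero]
    · rw [← Real.rpow_add h]; norm_num
  have eb2 : (b ^ (p/2)) * (b ^ (p/2)) = b ^ p := by
    rcases eq_or_lt_of_le hb with h | h
    · rw [← h, Real.zero_rpow hγ2, Real.zero_rpow (by linarith : p ≠ 0), mul_zero]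
    · rw [← Real.rpow_add h]; norm_num
  -- hypotheses for key_ineq
  have haN : a ≤ ‖ξ‖ := hadef ▸ plus_le (norm_nonneg ξ)
  have hbM : b ≤ ‖η‖ := hbdef ▸ plus_le (norm_nonneg η)
  have hN1 : ‖ξ‖ - a ≤ 1 := by
    rcases le_total (‖ξ‖ - 1) 0 with h | h
    · rw [hadef, max_eq_right h]; linarith
    · rw [hadef, max_eq_left h]; linarith
  have hM1 : ‖η‖ - b ≤ 1 := by
    rcases le_total (‖η‖ - 1) 0 with h | h
    · rw [hbdef, max_eq_right h]; linarith
    · rw [hbdef, max_eq_left h]; linarith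
  have hNa : 0 < a → ‖ξ‖ = a + 1 := by
    intro h
    rcases le_total (‖ξ‖ - 1) 0 with h' | h'
    · rw [hadef, max_eq_right h'] at h; linarith
    · rw [hadef, max_eq_left h']; ring
  have hMb : 0 < b → ‖η‖ = b + 1 := by
    intro h
    rcases le_total (‖η‖ - 1) 0 with h' | h'
    · rw [hbdef, max_eq_right h'] at h; linarith
    · rw [hbdef, max_eq_left h']; ring
  have key := key_ineq p c hp1 hc hc1 hscalar a b (‖ξ‖) (‖η‖) (⟪u, v⟫_ℝ)
    ha hb haN hbM hN1 hM1 hNa hMb (neg_le_of_abs_le hT) (le_of_abs_le hT)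
  have hco : ⟪v, u⟫_ℝ = ⟪u, v⟫_ℝ := real_inner_comm u v
  have e1 : ‖ξ‖ * (a ^ (p-1) * ⟪u, u⟫_ℝ) = a ^ (p-1) * ‖ξ‖ := by
    rw [show ‖ξ‖ * (a ^ (p-1) * ⟪u, u⟫_ℝ) = a ^ (p-1) * (‖ξ‖ * ⟪u, u⟫_ℝ) from by ring, hNU]
  have e2 : ‖η‖ * (b ^ (p-1) * ⟪v, v⟫_ℝ) = b ^ (p-1) * ‖η‖ := by
    rw [show ‖η‖ * (b ^ (p-1) * ⟪v, v⟫_ℝ) = b ^ (p-1) * (‖η‖ * ⟪v, v⟫_ℝ) from by ring, hMV]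
  have e3 : a ^ (p/2) * (a ^ (p/2) * ⟪u, u⟫_ℝ) = a ^ p := by
    rw [← mul_assoc, ea2, haU]
  have e4 : b ^ (p/2) * (b ^ (p/2) * ⟪v, v⟫_ℝ) = b ^ p := by
    rw [← mul_assoc, eb2, hbV]
  have eR : a ^ (p / 2) * (a ^ (p / 2) * ⟪u, u⟫_ℝ) - a ^ (p / 2) * (b ^ (p / 2) * ⟪v, u⟫_ℝ) -
        (b ^ (p / 2) * (a ^ (p / 2) * ⟪u, v⟫_ℝ) - b ^ (p / 2) * (b ^ (p / 2) * ⟪v, v⟫_ℝ))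
      = a ^ p - 2 * a ^ (p/2) * b ^ (p/2) * ⟪u, v⟫_ℝ + b ^ p := by
    rw [hco]; linear_combination e3 + e4
  have eL : ‖ξ‖ * (a ^ (p - 1) * ⟪u, u⟫_ℝ) - ‖ξ‖ * (b ^ (p - 1) * ⟪v, u⟫_ℝ) -
        (‖η‖ * (a ^ (p - 1) * ⟪u, v⟫_ℝ) - ‖η‖ * (b ^ (p - 1) * ⟪v, v⟫_ℝ))
      = a ^ (p-1) * ‖ξ‖ - (a ^ (p-1) * ‖η‖ + b ^ (p-1) * ‖ξ‖) * ⟪u, v⟫_ℝ + b ^ (p-1) * ‖η‖ := by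
    rw [hco]; linear_combination e1 + e2
  rw [ge_iff_le, eR, eL]
  exact key
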